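/- arXiv:2504.09458 — 5 statements merged into one kernel-verified Lean document; each statement's English description precedes it below -/
import Mathlib

section
/- Let H and K be Hilbert spaces over the same scalar field (both real or both complex), let {f_j}_{j≥1} be a frame for H, and let T : H → K be a bounded linear operator with closed range. Then {Tf_j}_{j≥1} is a frame for the Hilbert space R(T), the range of T. -/
open scoped ENNReal NNReal

/-- Lemma 4.2 (i): the image of a frame under a bounded linear operator with closed range
is a frame for the range. -/
theorem statement9 {𝕜 H K : Type*} [RCLike 𝕜]
    [NormedAddCommGroup H] [InnerProductSpace 𝕜 H] [CompleteSpace H]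
    [NormedAddCommGroup K] [InnerProductSpace 𝕜 K] [CompleteSpace K]
    (f : ℕ → H) (A B : ℝ≥0) (hA : 0 < A) (hAB : A ≤ B)
    (hframe : ∀ v : H,
      (A : ℝ≥0∞) * (‖v‖₊ : ℝ≥0∞) ^ 2 ≤ ∑' j, (‖(inner 𝕜 v (f j) : 𝕜)‖₊ : ℝ≥0∞) ^ 2 ∧
      ∑' j, (‖(inner 𝕜 v (f j) : 𝕜)‖₊ : ℝ≥0∞) ^ 2 ≤ (B : ℝ≥0∞) * (‖v‖₊ : ℝ≥0∞) ^ 2)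
    (T : H →L[𝕜] K) (hT : IsClosed (Set.range T)) :
    ∃ A' B' : ℝ≥0, 0 < A' ∧ A' ≤ B' ∧
      ∀ w ∈ Set.range T,
        (A' : ℝ≥0∞) * (‖w‖₊ : ℝ≥0∞) ^ 2 ≤ ∑' j, (‖(inner 𝕜 w (T (f j)) : 𝕜)‖₊ : ℝ≥0∞) ^ 2 ∧
        ∑' j, (‖(inner 𝕜 w (T (f j)) : 𝕜)‖₊ : ℝ≥0∞) ^ 2 ≤ (B' : ℝ≥0∞) * (‖w‖₊ : ℝ≥0∞) ^ 2 := by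
  classical
  set N : Submodule 𝕜 H := (LinearMap.ker (T : H →ₗ[𝕜] K))ᗮ with hN
  set R : Submodule 𝕜 K := LinearMap.range (T : H →ₗ[𝕜] K) with hR
  have hRclosed : IsClosed (R : Set K) := by
    rw [hR, LinearMap.coe_range]; exact hT
  haveI : CompleteSpace R := hRclosed.completeSpace_coe
  -- the restricted operator
  let S : N →L[𝕜] R := (T.comp N.subtypeL).codRestrict R
    (fun x => LinearMap.mem_range.2 ⟨x, rfl⟩)
  have hSapp : ∀ x : N, (S x : K) = T (x : H) := fun x => rfl
  have hker : LinearMap.ker (S : N →ₗ[𝕜] R) = ⊥ := by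
    rw [LinearMap.ker_eq_bot']
    intro x hx
    have h1 : T (x : H) = 0 := by
      have := congrArg (Subtype.val) hx
      simpa [hSapp] using this
    have h2 : (x : H) ∈ LinearMap.ker (T : H →ₗ[𝕜] K) := h1
    have h3 : (inner 𝕜 (x : H) (x : H) : 𝕜) = 0 := by
      have := x.2
      rw [Submodule.mem_orthogonal] at this
      exact this (x : H) h2
    have : (x : H) = 0 := inner_self_eq_zero.1 h3
    exact Subtype.ext this
  have hrange : LinearMap.range (S : N →ₗ[𝕜] R) = ⊤ := by
    rw [LinearMap.range_eq_top]
    rintro ⟨w, hw⟩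
    obtain ⟨u, hu⟩ := LinearMap.mem_range.1 hw
    obtain ⟨y, hy, z, hz, huyz⟩ := (LinearMap.ker (T : H →ₗ[𝕜] K)).exists_add_mem_mem_orthogonal u
    refine ⟨⟨z, hz⟩, ?_⟩
    apply Subtype.ext
    have : T u = T z := by
      rw [huyz, map_add, (show T y = 0 from hy), zero_add]
    simpa [hSapp, this] using hu
  let E := ContinuousLinearEquiv.ofBijective S hker hrange
  set c : ℝ≥0 := ‖(E.symm : R →L[𝕜] N)‖₊ with hc
  set m : ℝ≥0 := max c 1 with hm
  have hm1 : (1 : ℝ≥0) ≤ m := le_max_right _ _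
  have hmne : m ≠ 0 := by positivity
  -- key: lower bound for adjoint on range
  have key : ∀ w : K, w ∈ R → ‖w‖₊ ≤ m * ‖(ContinuousLinearMap.adjoint T) w‖₊ := by
    intro w hw
    set u : N := E.symm ⟨w, hw⟩ with hu
    have hTu : T (u : H) = w := by
      have : E u = ⟨w, hw⟩ := E.apply_symm_apply _
      have := congrArg Subtype.val this
      exact this
    have h1 : ‖w‖ ^ 2 = RCLike.re (inner 𝕜 ((ContinuousLinearMap.adjoint T) w) (u : H) : 𝕜) := by
      rw [ContinuousLinearMap.adjoint_inner_left, hTu, inner_self_eq_norm_sq]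
    have h2 : RCLike.re (inner 𝕜 ((ContinuousLinearMap.adjoint T) w) (u : H) : 𝕜)
        ≤ ‖(ContinuousLinearMap.adjoint T) w‖ * ‖(u : H)‖ := by
      calc RCLike.re (inner 𝕜 ((ContinuousLinearMap.adjoint T) w) (u : H) : 𝕜)
          ≤ ‖(inner 𝕜 ((ContinuousLinearMap.adjoint T) w) (u : H) : 𝕜)‖ := RCLike.re_le_norm _
        _ ≤ _ := norm_inner_le_norm _ _
    have h3 : ‖(u : H)‖ ≤ (c : ℝ) * ‖w‖ := by
      have := (E.symm : R →L[𝕜] N).le_opNorm ⟨w, hw⟩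
      simpa [hc, hu, coe_nnnorm] using this
    have h4 : ‖w‖ ^ 2 ≤ (c : ℝ) * ‖(ContinuousLinearMap.adjoint T) w‖ * ‖w‖ := by
      nlinarith [norm_nonneg ((ContinuousLinearMap.adjoint T) w), norm_nonneg w, h1, h2, h3]
    have h5 : ‖w‖ ≤ (m : ℝ) * ‖(ContinuousLinearMap.adjoint T) w‖ := by
      rcases eq_or_lt_of_le (norm_nonneg w) with h | h
      · rw [← h]; positivity
      · have hcm : (c : ℝ) ≤ m := by exact_mod_cast le_max_left c 1
        have h4' : ‖w‖ * ‖w‖ ≤ ((m:ℝ) * ‖(ContinuousLinearMap.adjoint T) w‖) * ‖w‖ := by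
          nlinarith [h4, mul_nonneg (mul_nonneg (sub_nonneg.2 hcm)
            (norm_nonneg ((ContinuousLinearMap.adjoint T) w))) (norm_nonneg w)]
        exact le_of_mul_le_mul_right h4' h
    rw [← NNReal.coe_le_coe]
    simpa [coe_nnnorm] using h5
  refine ⟨A / m ^ 2, max (A / m ^ 2) (B * ‖ContinuousLinearMap.adjoint T‖₊ ^ 2), ?_, le_max_left _ _, ?_⟩
  · positivity
  · intro w hw
    have hwR : w ∈ R := LinearMap.mem_range.2 (Set.mem_range.1 hw)
    set g : H := (ContinuousLinearMap.adjoint T) w with hg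
    have hinner : ∀ j, (inner 𝕜 w (T (f j)) : 𝕜) = inner 𝕜 g (f j) := fun j =>
      (ContinuousLinearMap.adjoint_inner_left T (f j) w).symm
    have hsum : (∑' j, (‖(inner 𝕜 w (T (f j)) : 𝕜)‖₊ : ℝ≥0∞) ^ 2)
        = ∑' j, (‖(inner 𝕜 g (f j) : 𝕜)‖₊ : ℝ≥0∞) ^ 2 := by
      congr 1; ext j; rw [hinner j]
    constructor
    · rw [hsum]
      refine le_trans ?_ (hframe g).1
      have h1 : (‖w‖₊ : ℝ≥0) ^ 2 ≤ m ^ 2 * ‖g‖₊ ^ 2 := by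
        have := key w hwR
        calc ‖w‖₊ ^ 2 ≤ (m * ‖g‖₊) ^ 2 := pow_le_pow_left₀ zero_le this 2
          _ = m ^ 2 * ‖g‖₊ ^ 2 := by ring
      calc ((A / m ^ 2 : ℝ≥0) : ℝ≥0∞) * (‖w‖₊ : ℝ≥0∞) ^ 2
          = ((A / m ^ 2 * ‖w‖₊ ^ 2 : ℝ≥0) : ℝ≥0∞) := by push_cast; ring
        _ ≤ ((A / m ^ 2 * (m ^ 2 * ‖g‖₊ ^ 2) : ℝ≥0) : ℝ≥0∞) := by
            exact_mod_cast mul_le_mul_right h1 _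
        _ = ((A * ‖g‖₊ ^ 2 : ℝ≥0) : ℝ≥0∞) := by
            rw [← mul_assoc, div_mul_cancel₀ _ (pow_ne_zero 2 hmne)]
        _ = (A : ℝ≥0∞) * (‖g‖₊ : ℝ≥0∞) ^ 2 := by push_cast; ring
    · rw [hsum]
      refine le_trans (hframe g).2 ?_
      have h1 : (‖g‖₊ : ℝ≥0) ^ 2 ≤ ‖ContinuousLinearMap.adjoint T‖₊ ^ 2 * ‖w‖₊ ^ 2 := by
        have := (ContinuousLinearMap.adjoint T).le_opNNNorm w
        calc ‖g‖₊ ^ 2 ≤ (‖ContinuousLinearMap.adjoint T‖₊ * ‖w‖₊) ^ 2 :=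
              pow_le_pow_left₀ zero_le this 2
          _ = _ := by ring
      calc (B : ℝ≥0∞) * (‖g‖₊ : ℝ≥0∞) ^ 2
          = ((B * ‖g‖₊ ^ 2 : ℝ≥0) : ℝ≥0∞) := by push_cast; ring
        _ ≤ ((B * (‖ContinuousLinearMap.adjoint T‖₊ ^ 2 * ‖w‖₊ ^ 2) : ℝ≥0) : ℝ≥0∞) := by
            exact_mod_cast mul_le_mul_right h1 _
        _ = ((B * ‖ContinuousLinearMap.adjoint T‖₊ ^ 2 : ℝ≥0) : ℝ≥0∞) * (‖w‖₊ : ℝ≥0∞) ^ 2 := by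
            push_cast; ring
        _ ≤ _ := mul_le_mul_left
            (ENNReal.coe_le_coe.2 (le_max_right (A / m ^ 2) (B * ‖ContinuousLinearMap.adjoint T‖₊ ^ 2))) _
end

section
/- Let A ⊆ ℝⁿ be closed, {x_j}_{j≥1} ⊆ Aᶜ, fix ε ≤ 1/4 and σ > 1, and let B_j = B(x_j, ε·dist(x_j,A)). Suppose {E_j}_{j≥1} is a collection of Lebesgue-measurable sets with pairwise disjoint interiors such that E_j ⊆ B_j, m(∂E_j) = 0, and m(E_j) ≥ (1/σ)·m(B_j) for every j, where m is Lebesgue measure. Then Σ_{j≥1} χ_{B_j}(x) ≤ 4ⁿσ for every x ∈ ℝⁿ. -/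
open MeasureTheory Metric Set
open scoped ENNReal NNReal

/-- Lemma C.1 (covering lemma): if `E_j ⊆ B_j = B(x_j, ε·dist(x_j,A))` have pairwise
disjoint interiors, null boundaries and `m(E_j) ≥ (1/σ) m(B_j)`, with `ε ≤ 1/4` and
`σ > 1`, then every point lies in at most `4ⁿσ` of the balls `B_j`. -/
theorem statement12 (n : ℕ)
    (A : Set (EuclideanSpace ℝ (Fin n))) (hA : IsClosed A)
    (x : ℕ → EuclideanSpace ℝ (Fin n)) (hx : ∀ j, x j ∉ A)
    (ε σ : ℝ) (hε : ε ≤ 1 / 4) (hσ : 1 < σ)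
    (E : ℕ → Set (EuclideanSpace ℝ (Fin n)))
    (hmeas : ∀ j, MeasurableSet (E j))
    (hdisj : Pairwise fun i j => Disjoint (interior (E i)) (interior (E j)))
    (hsub : ∀ j, E j ⊆ ball (x j) (ε * infDist (x j) A))
    (hbdry : ∀ j, volume (frontier (E j)) = 0)
    (hlow : ∀ j, ENNReal.ofReal (1 / σ) * volume (ball (x j) (ε * infDist (x j) A)) ≤
      volume (E j)) :
    ∀ y : EuclideanSpace ℝ (Fin n), ∀ s : Finset ℕ,
      (∀ j ∈ s, y ∈ ball (x j) (ε * infDist (x j) A)) → (s.card : ℝ) ≤ 4 ^ n * σ := by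
  classical
  intro y s hy
  have hσ0 : (0:ℝ) < σ := lt_trans one_pos hσ
  rcases s.eq_empty_or_nonempty with rfl | ⟨j0, hj0⟩
  · simp only [Finset.card_empty, Nat.cast_zero]
    positivity
  -- basic positivity facts
  have h1 : 0 < ε * infDist (x j0) A := lt_of_le_of_lt dist_nonneg (hy j0 hj0)
  have hε0 : 0 < ε := by
    by_contra h
    push_neg at h
    nlinarith [infDist_nonneg (x := x j0) (s := A)]
  set d := infDist y A with hd_def
  have hdj0 : 0 < infDist (x j0) A := by nlinarith
  have hd : 0 < d := by
    have h2 := infDist_le_infDist_add_dist (x := x j0) (y := y) (s := A)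
    have h3 : dist (x j0) y < ε * infDist (x j0) A := by
      rw [dist_comm]; exact hy j0 hj0
    have h4 : ε * infDist (x j0) A ≤ (1/4) * infDist (x j0) A := by nlinarith
    nlinarith
  -- comparisons for each j in s
  have hcomp : ∀ j ∈ s, (4/5) * (ε * d) ≤ ε * infDist (x j) A ∧
      infDist (x j) A ≤ (4/3) * d := by
    intro j hj
    have hdj : 0 ≤ infDist (x j) A := infDist_nonneg
    have h3 : dist y (x j) < ε * infDist (x j) A := hy j hj
    have h4 : ε * infDist (x j) A ≤ (1/4) * infDist (x j) A := by nlinarith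
    have h5 : infDist (x j) A ≤ d + dist (x j) y := infDist_le_infDist_add_dist
    have h6 : d ≤ infDist (x j) A + dist y (x j) := infDist_le_infDist_add_dist
    rw [dist_comm] at h5
    constructor
    · nlinarith
    · nlinarith
  -- ball inclusions
  have hball : ∀ j ∈ s, ball (x j) (ε * infDist (x j) A) ⊆ ball y ((8/3) * (ε * d)) := by
    intro j hj z hz
    rw [mem_ball] at hz ⊢
    have h3 : dist (x j) y < ε * infDist (x j) A := by rw [dist_comm]; exact hy j hj
    have h7 := (hcomp j hj).2
    calc dist z y ≤ dist z (x j) + dist (x j) y := dist_triangle _ _ _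
      _ < ε * infDist (x j) A + ε * infDist (x j) A := by linarith
      _ ≤ (8/3) * (ε * d) := by nlinarith
  -- volume formula
  set V := volume (ball (0 : EuclideanSpace ℝ (Fin n)) 1) with hV_def
  have hVpos : V ≠ 0 := (measure_ball_pos volume 0 one_pos).ne'
  have hVtop : V ≠ ⊤ := measure_ball_lt_top.ne
  have hrank : Module.finrank ℝ (EuclideanSpace ℝ (Fin n)) = n := by
    simp [finrank_euclideanSpace]
  have hEvol : ∀ j, volume (E j) = volume (interior (E j)) := by
    intro j
    refine le_antisymm ?_ (measure_mono interior_subset)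
    calc volume (E j) ≤ volume (interior (E j) ∪ frontier (E j)) := by
          refine measure_mono ?_
          rw [← closure_eq_interior_union_frontier]
          exact subset_closure
      _ ≤ volume (interior (E j)) + volume (frontier (E j)) := measure_union_le _ _
      _ = volume (interior (E j)) := by rw [hbdry j, add_zero]
  -- main measure estimate
  have hc5 : (0:ℝ) < (4/5) * (ε * d) := by positivity
  have hc8 : (0:ℝ) < (8/3) * (ε * d) := by positivity
  have key : (s.card : ℝ≥0∞) * (ENNReal.ofReal (1/σ) *
      ENNReal.ofReal (((4/5) * (ε * d)) ^ n) * V) ≤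
      ENNReal.ofReal (((8/3) * (ε * d)) ^ n) * V := by
    calc (s.card : ℝ≥0∞) * (ENNReal.ofReal (1/σ) *
        ENNReal.ofReal (((4/5) * (ε * d)) ^ n) * V)
        = ∑ j ∈ s, (ENNReal.ofReal (1/σ) *
            ENNReal.ofReal (((4/5) * (ε * d)) ^ n) * V) := by
          rw [Finset.sum_const, nsmul_eq_mul]
      _ ≤ ∑ j ∈ s, volume (E j) := by
          refine Finset.sum_le_sum fun j hj => ?_
          refine le_trans ?_ (hlow j)
          have hrj : 0 < ε * infDist (x j) A := lt_of_le_of_lt dist_nonneg (hy j hj)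
          rw [Measure.addHaar_ball_of_pos volume (x j) hrj, hrank, mul_assoc]
          refine mul_le_mul_right (mul_le_mul_left ?_ V) _
          exact ENNReal.ofReal_le_ofReal
            (pow_le_pow_left₀ hc5.le (hcomp j hj).1 n)
      _ = ∑ j ∈ s, volume (interior (E j)) := Finset.sum_congr rfl fun j _ => hEvol j
      _ = volume (⋃ j ∈ s, interior (E j)) := by
          refine (measure_biUnion_finset ?_ fun j _ => isOpen_interior.measurableSet).symm
          exact fun i _ j _ hij => hdisj hij
      _ ≤ volume (ball y ((8/3) * (ε * d))) := by
          refine measure_mono (Set.iUnion₂_subset fun j hj => ?_)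
          exact (interior_subset.trans (hsub j)).trans (hball j hj)
      _ = ENNReal.ofReal (((8/3) * (ε * d)) ^ n) * V := by
          rw [Measure.addHaar_ball_of_pos volume y hc8, hrank]
  -- cancel V
  rw [← mul_assoc] at key
  have key2 : (s.card : ℝ≥0∞) * (ENNReal.ofReal (1/σ) *
      ENNReal.ofReal (((4/5) * (ε * d)) ^ n)) ≤
      ENNReal.ofReal (((8/3) * (ε * d)) ^ n) := by
    exact (ENNReal.mul_le_mul_iff_left hVpos hVtop).mp key
  -- to reals
  have key3 : (s.card : ℝ) * ((1/σ) * ((4/5) * (ε * d)) ^ n) ≤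
      ((8/3) * (ε * d)) ^ n := by
    rw [← ENNReal.ofReal_le_ofReal_iff (by positivity)]
    refine le_trans (le_of_eq ?_) key2
    rw [ENNReal.ofReal_mul (by positivity), ENNReal.ofReal_mul (by positivity),
      ENNReal.ofReal_natCast]
  -- conclude
  have hc5n : (0:ℝ) < ((4/5) * (ε * d)) ^ n := pow_pos hc5 n
  have hsplit : ((8/3) * (ε * d)) ^ n = (10/3) ^ n * ((4/5) * (ε * d)) ^ n := by
    rw [← mul_pow]; ring_nf
  rw [hsplit] at key3
  have h103 : ((10:ℝ)/3) ^ n ≤ 4 ^ n := pow_le_pow_left₀ (by norm_num) (by norm_num) n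
  have hcard : (s.card : ℝ) * (1/σ) ≤ (10/3) ^ n := by
    have := le_of_mul_le_mul_right (by linarith [key3] : (s.card : ℝ) * (1/σ) * ((4/5) * (ε * d)) ^ n ≤ (10/3) ^ n * ((4/5) * (ε * d)) ^ n) hc5n
    exact this
  have : (s.card : ℝ) ≤ σ * (10/3) ^ n := by
    have h := mul_le_mul_of_nonneg_left hcard hσ0.le
    rw [show σ * ((s.card:ℝ) * (1/σ)) = (s.card:ℝ) from by field_simp] at h
    exact h
  nlinarith [pow_nonneg (by norm_num : (0:ℝ) ≤ 10/3) n]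
end

section
/- Let ε ≤ 1/20, let A ⊆ ℝⁿ be closed, let Ø ⊆ Aᶜ, and suppose {x_j}_{j≥1} is an ε-fine Whitney set for Ø with respect to A. Then there exists a set of indices J ⊆ ℕ such that {x_j}_{j∈J} is a 5ε-fine Whitney set for Ø with respect to A, with covering constant N ≤ 3·20ⁿ. -/
open MeasureTheory Metric Set
open scoped ENNReal NNReal


/-- Greedy selection: `goodIdx B j` holds iff the ball `B j` is disjoint from all
previously selected balls. -/
def goodIdx {α : Type*} (B : ℕ → Set α) : ℕ → Prop
  | n => ∀ m, m < n → goodIdx B m → Disjoint (B m) (B n)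

lemma goodIdx_iff {α : Type*} (B : ℕ → Set α) (n : ℕ) :
    goodIdx B n ↔ ∀ m, m < n → goodIdx B m → Disjoint (B m) (B n) := by
  rw [goodIdx]

lemma goodIdx_pairwiseDisjoint {α : Type*} (B : ℕ → Set α) :
    Set.PairwiseDisjoint {j | goodIdx B j} B := by
  intro j hj k hk hjk
  rcases lt_or_gt_of_ne hjk with h | h
  · exact (goodIdx_iff B k).1 hk j h hj
  · exact ((goodIdx_iff B j).1 hj k h hk).symm

/-- Volume counting: pairwise disjoint balls of radius at least `r` contained in a ball of
radius `R` number at most `(R/r) ^ dim`. -/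
lemma card_le_of_disjoint_balls {E : Type*} [NormedAddCommGroup E] [NormedSpace ℝ E]
    [MeasurableSpace E] [BorelSpace E] [FiniteDimensional ℝ E]
    (μ : Measure E) [μ.IsAddHaarMeasure]
    (s : Finset ℕ) (c : ℕ → E) (ρ : ℕ → ℝ) (r R : ℝ) (hr : 0 < r) (hR : 0 < R)
    (hρ : ∀ j ∈ s, r ≤ ρ j)
    (y : E) (hsub : ∀ j ∈ s, ball (c j) (ρ j) ⊆ ball y R)
    (hdisj : Set.PairwiseDisjoint (↑s) (fun j => ball (c j) (ρ j))) :
    (s.card : ℝ) * r ^ (Module.finrank ℝ E) ≤ R ^ (Module.finrank ℝ E) := by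
  set v := μ (ball (0 : E) 1) with hv
  have hv0 : v ≠ 0 := (measure_ball_pos μ 0 one_pos).ne'
  have hvt : v ≠ ⊤ := measure_ball_lt_top.ne
  have key : (s.card : ℝ≥0∞) * ENNReal.ofReal (r ^ Module.finrank ℝ E) * v
      ≤ ENNReal.ofReal (R ^ Module.finrank ℝ E) * v := by
    calc (s.card : ℝ≥0∞) * ENNReal.ofReal (r ^ Module.finrank ℝ E) * v
        = s.card • (ENNReal.ofReal (r ^ Module.finrank ℝ E) * v) := by
          rw [nsmul_eq_mul, mul_assoc]
      _ ≤ ∑ j ∈ s, μ (ball (c j) (ρ j)) := by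
          apply Finset.card_nsmul_le_sum
          intro j hj
          rw [Measure.addHaar_ball_of_pos μ _ (hr.trans_le (hρ j hj))]
          gcongr
          exact hρ j hj
      _ = μ (⋃ j ∈ s, ball (c j) (ρ j)) :=
          (measure_biUnion_finset hdisj fun j _ => measurableSet_ball).symm
      _ ≤ μ (ball y R) := measure_mono (Set.iUnion₂_subset hsub)
      _ = ENNReal.ofReal (R ^ Module.finrank ℝ E) * v :=
          Measure.addHaar_ball_of_pos μ _ hR
  have key2 : (s.card : ℝ≥0∞) * ENNReal.ofReal (r ^ Module.finrank ℝ E)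
      ≤ ENNReal.ofReal (R ^ Module.finrank ℝ E) := (ENNReal.mul_le_mul_iff_left hv0 hvt).mp key
  rw [show ((s.card : ℝ≥0∞)) = ENNReal.ofReal (s.card : ℝ) by simp,
    ← ENNReal.ofReal_mul (by positivity)] at key2
  exact (ENNReal.ofReal_le_ofReal_iff (by positivity)).mp key2

/-- Lemma C.3 (extracting sub-Whitney sets): from any ε-fine Whitney set `{x_j}` for `Ø`
with respect to `A` (with `ε ≤ 1/20`) one can extract indices `J ⊆ ℕ` so that `{x_j}_{j∈J}`
is a 5ε-fine Whitney set for `Ø` with respect to `A` with covering constant at most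
`3·20ⁿ`. -/
theorem statement14 (n : ℕ)
    (ε : ℝ) (hε0 : 0 < ε) (hε : ε ≤ 1 / 20)
    (A : Set (EuclideanSpace ℝ (Fin n))) (hA : IsClosed A)
    (O : Set (EuclideanSpace ℝ (Fin n))) (hO : O ⊆ Aᶜ)
    (x : ℕ → EuclideanSpace ℝ (Fin n)) (hx : ∀ j, x j ∉ A)
    (hcover : O ⊆ ⋃ j, ball (x j) (ε * infDist (x j) A))
    (hconst : ∃ N : ℕ, ∀ y : EuclideanSpace ℝ (Fin n), ∀ s : Finset ℕ,
      (∀ j ∈ s, y ∈ ball (x j) (ε * infDist (x j) A)) → s.card ≤ N) :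
    ∃ J : Set ℕ,
      (O ⊆ ⋃ j ∈ J, ball (x j) (5 * ε * infDist (x j) A)) ∧
      (∀ y : EuclideanSpace ℝ (Fin n), ∀ s : Finset ℕ,
        ↑s ⊆ J → (∀ j ∈ s, y ∈ ball (x j) (5 * ε * infDist (x j) A)) →
          (s.card : ℝ) ≤ 3 * 20 ^ n) := by
  set d : ℕ → ℝ := fun j => infDist (x j) A with hd
  have hd0 : ∀ j, 0 ≤ d j := fun j => infDist_nonneg
  set B : ℕ → Set (EuclideanSpace ℝ (Fin n)) := fun j => ball (x j) (ε * d j) with hB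
  refine ⟨{j | goodIdx B j}, ?_, ?_⟩
  · -- covering
    intro y hy
    obtain ⟨j, hj⟩ := mem_iUnion.1 (hcover hy)
    by_cases hg : goodIdx B j
    · refine mem_iUnion₂.2 ⟨j, hg, ?_⟩
      exact ball_subset_ball (by nlinarith [hd0 j]) hj
    · rw [goodIdx_iff] at hg
      push_neg at hg
      obtain ⟨m, hmj, hgm, hnd⟩ := hg
      rw [Set.not_disjoint_iff] at hnd
      obtain ⟨z, hzm, hzj⟩ := hnd
      have h1 : dist z (x m) < ε * d m := mem_ball.1 hzm
      have h2 : dist z (x j) < ε * d j := mem_ball.1 hzj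
      have h3 : dist y (x j) < ε * d j := mem_ball.1 hj
      have hL : d j ≤ d m + dist (x j) (x m) := infDist_le_infDist_add_dist
      have hdist : dist (x j) (x m) ≤ dist z (x j) + dist z (x m) := by
        rw [dist_comm z (x j)]; exact dist_triangle _ _ _
      have hcomp : d j ≤ 2 * d m := by nlinarith [hd0 j, hd0 m]
      refine mem_iUnion₂.2 ⟨m, hgm, mem_ball.2 ?_⟩
      have hy2 : dist y (x m) ≤ dist y (x j) + dist z (x j) + dist z (x m) := by
        calc dist y (x m) ≤ dist y (x j) + dist (x j) (x m) := dist_triangle _ _ _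
          _ ≤ dist y (x j) + (dist z (x j) + dist z (x m)) := by linarith
          _ = dist y (x j) + dist z (x j) + dist z (x m) := by ring
      nlinarith [hd0 m]
  · -- bounded multiplicity
    intro y s hsJ hs
    rcases s.eq_empty_or_nonempty with rfl | ⟨j₀, hj₀⟩
    · simp
    set D : ℝ := infDist y A with hD
    have hfacts : ∀ j ∈ s, 0 < d j ∧ (3/4) * d j ≤ D ∧ (4/5) * D ≤ d j := by
      intro j hj
      have hyj : dist y (x j) < 5 * ε * d j := mem_ball.1 (hs j hj)
      have hdj0 : 0 < d j := by nlinarith [dist_nonneg (x := y) (y := x j), hd0 j]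
      have hu : D ≤ d j + dist y (x j) := infDist_le_infDist_add_dist
      have hl : d j ≤ D + dist (x j) y := infDist_le_infDist_add_dist
      rw [dist_comm (x j) y] at hl
      exact ⟨hdj0, by nlinarith, by nlinarith⟩
    have hD0 : 0 < D := by
      obtain ⟨h1, h2, _⟩ := hfacts j₀ hj₀
      nlinarith
    have key := card_le_of_disjoint_balls volume s x (fun j => ε * d j)
      ((4/5) * ε * D) (8 * ε * D) (by positivity) (by positivity)
      (fun j hj => by nlinarith [(hfacts j hj).2.2]) y
      (fun j hj w hw => by
        have h1 : dist w (x j) < ε * d j := mem_ball.1 hw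
        have h2 : dist y (x j) < 5 * ε * d j := mem_ball.1 (hs j hj)
        have h3 : (3/4) * d j ≤ D := (hfacts j hj).2.1
        have h4 : dist w y ≤ dist w (x j) + dist y (x j) := by
          rw [dist_comm y (x j)]; exact dist_triangle _ _ _
        exact mem_ball.2 (by nlinarith))
      (fun j hj k hk hjk => goodIdx_pairwiseDisjoint B (hsJ hj) (hsJ hk) hjk)
    rw [finrank_euclideanSpace_fin] at key
    have h10 : (s.card : ℝ) ≤ 10 ^ n := by
      have hrn : (0:ℝ) < ((4/5) * ε * D) ^ n := by positivity
      have key' : (s.card:ℝ) * ((4/5) * ε * D)^n ≤ 10^n * ((4/5) * ε * D)^n := by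
        calc (s.card:ℝ) * ((4/5) * ε * D)^n ≤ (8 * ε * D)^n := key
          _ = (10 * ((4/5) * ε * D))^n := by ring_nf
          _ = 10^n * ((4/5) * ε * D)^n := mul_pow _ _ _
      exact le_of_mul_le_mul_right key' hrn
    have h20 : (10:ℝ) ^ n ≤ 20 ^ n := by
      apply pow_le_pow_left₀ <;> norm_num
    have h20pos : (0:ℝ) < 20 ^ n := by positivity
    linarith
end

section
/- Let Ω ⊊ ℂ be a nonempty open proper subset, k ≥ 1 an integer, and ε ∈ (0, 1/2]. Let {q_j}_{j≥1} ⊆ Ω be points such that, with B_j = B(q_j, ε·d(q_j)) where d(z) = dist(z, ∂Ω), every point of ℂ lies in at most N of the balls B_j (i.e. Σ_j χ_{B_j}(x) ≤ N for all x ∈ ℂ). Then for every holomorphic function F on Ω: Σ_{j≥1} d(q_j)^{2k−1} m(B_j) |F^{(k)}(q_j)|² ≤ 2^{2k−1} N ∫_Ω |F^{(k)}(z)|² d(z)^{2k−1} dA(z), where m is planar Lebesgue measure and dA planar Lebesgue measure. -/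
open MeasureTheory Metric Set
open scoped ENNReal NNReal Real

lemma ofReal_norm_eq_coe_nnnorm {E : Type*} [SeminormedAddGroup E] (x : E) :
    ENNReal.ofReal ‖x‖ = (‖x‖₊ : ℝ≥0∞) :=
  ENNReal.ofReal_eq_coe_nnreal (norm_nonneg x)

lemma circle_avg {f : ℂ → ℂ} {c : ℂ} {ρ : ℝ} (hρ : 0 < ρ)
    (hf : DifferentiableOn ℂ f (closedBall c ρ)) :
    (∫ θ in (0:ℝ)..2 * π, f (circleMap c ρ θ)) = (2 * π : ℝ) * f c := by
  have h := hf.circleIntegral_sub_inv_smul (mem_ball_self hρ)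
  rw [circleIntegral] at h
  simp only [deriv_circleMap, circleMap_sub_center, smul_eq_mul] at h
  have key : ∀ θ : ℝ, circleMap 0 ρ θ * Complex.I * ((circleMap 0 ρ θ)⁻¹ * f (circleMap c ρ θ))
      = Complex.I * f (circleMap c ρ θ) := by
    intro θ
    have hne : circleMap 0 ρ θ ≠ 0 := circleMap_ne_center hρ.ne'
    field_simp
  simp_rw [key] at h
  rw [intervalIntegral.integral_const_mul] at h
  have h2 : Complex.I * (∫ θ in (0:ℝ)..2 * π, f (circleMap c ρ θ))
      = Complex.I * ((2 * π : ℝ) * f c) := by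
    rw [h]; push_cast; ring
  exact mul_left_cancel₀ Complex.I_ne_zero h2

lemma stepA {f : ℂ → ℂ} {c : ℂ} {ρ : ℝ} (hρ : 0 < ρ)
    (hf : DifferentiableOn ℂ f (closedBall c ρ)) :
    ENNReal.ofReal (2 * π) * (‖f c‖₊ : ℝ≥0∞) ^ 2
      ≤ ∫⁻ θ in Ioo (-π) π, (‖f (circleMap c ρ θ)‖₊ : ℝ≥0∞) ^ 2 := by
  have hπ : (0:ℝ) < 2 * π := by positivity
  have hcont : Continuous fun θ : ℝ => f (circleMap c ρ θ) :=
    hf.continuousOn.comp_continuous (continuous_circleMap c ρ)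
      (fun θ => circleMap_mem_closedBall c hρ.le θ)
  -- circle average over -π..π
  have hper : Function.Periodic (fun θ : ℝ => f (circleMap c ρ θ)) (2 * π) :=
    (periodic_circleMap c ρ).comp f
  have havg : (∫ θ in (-π)..π, f (circleMap c ρ θ)) = (2 * π : ℝ) * f c := by
    have := hper.intervalIntegral_add_eq (-π) 0
    rw [zero_add] at this
    have hpi : -π + 2 * π = π := by ring
    rw [hpi] at this
    rw [this, circle_avg hρ hf]
  -- norm inequality
  have hnorm : 2 * π * ‖f c‖ ≤ ∫ θ in (-π)..π, ‖f (circleMap c ρ θ)‖ := by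
    have h1 : ‖∫ θ in (-π)..π, f (circleMap c ρ θ)‖
        ≤ ∫ θ in (-π)..π, ‖f (circleMap c ρ θ)‖ :=
      intervalIntegral.norm_integral_le_integral_norm (by linarith [Real.pi_pos])
    rw [havg] at h1
    calc 2 * π * ‖f c‖ = ‖((2 * π : ℝ) : ℂ) * f c‖ := by
          rw [norm_mul, Complex.norm_real, Real.norm_eq_abs, abs_of_pos hπ]
      _ ≤ _ := h1
  -- pass to lintegral
  have hint : IntegrableOn (fun θ : ℝ => ‖f (circleMap c ρ θ)‖) (Ioc (-π) π) :=
    (hcont.norm.integrableOn_Icc (a := -π) (b := π)).mono_set Ioc_subset_Icc_self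
  have hIoc : (∫ θ in (-π)..π, ‖f (circleMap c ρ θ)‖)
      = ∫ θ in Ioc (-π) π, ‖f (circleMap c ρ θ)‖ :=
    intervalIntegral.integral_of_le (by linarith [Real.pi_pos])
  have hle1 : ENNReal.ofReal (2 * π) * (‖f c‖₊ : ℝ≥0∞)
      ≤ ∫⁻ θ in Ioo (-π) π, (‖f (circleMap c ρ θ)‖₊ : ℝ≥0∞) := by
    have h2 : ENNReal.ofReal (2 * π * ‖f c‖)
        ≤ ENNReal.ofReal (∫ θ in Ioc (-π) π, ‖f (circleMap c ρ θ)‖) :=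
      ENNReal.ofReal_le_ofReal (by rw [← hIoc]; exact hnorm)
    rw [ofReal_integral_eq_lintegral_ofReal hint
      (ae_of_all _ fun θ => norm_nonneg _)] at h2
    rw [ENNReal.ofReal_mul hπ.le, ofReal_norm_eq_coe_nnnorm] at h2
    have hset : (volume : Measure ℝ).restrict (Ioo (-π) π)
        = volume.restrict (Ioc (-π) π) := Measure.restrict_congr_set Ioo_ae_eq_Ioc
    rw [hset]
    simpa only [ofReal_norm_eq_coe_nnnorm] using h2
  -- Cauchy-Schwarz
  set μ := (volume : Measure ℝ).restrict (Ioo (-π) π)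
  set n : ℝ → ℝ≥0∞ := fun θ => (‖f (circleMap c ρ θ)‖₊ : ℝ≥0∞) with hn
  have hnmeas : AEMeasurable n μ := by
    exact ((ENNReal.continuous_coe.comp hcont.nnnorm).measurable).aemeasurable
  have hCS := ENNReal.lintegral_mul_le_Lp_mul_Lq μ
    Real.HolderConjugate.two_two hnmeas aemeasurable_const (g := fun _ => (1:ℝ≥0∞))
  simp only [mul_one, Pi.mul_apply, ENNReal.one_rpow, lintegral_const,
    Measure.restrict_apply, MeasurableSet.univ, univ_inter] at hCS
  have hvol : μ univ = ENNReal.ofReal (2 * π) := by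
    simp only [μ, Measure.restrict_apply, MeasurableSet.univ, univ_inter, Real.volume_Ioo]
    ring_nf
  rw [hvol, one_mul] at hCS
  -- hCS : ∫⁻ n ∂μ ≤ (∫⁻ n ^ (2:ℝ))^(1/2) * (ofReal (2π))^(1/2)
  set X := ∫⁻ θ, n θ ^ (2:ℕ) ∂μ with hX
  have hrn : (∫⁻ θ, n θ ^ (2:ℝ) ∂μ) = X := by
    simp_rw [hX, ← ENNReal.rpow_natCast (n _) 2]
    norm_num
  rw [hrn] at hCS
  have hsq : (∫⁻ θ, n θ ∂μ) ^ (2:ℕ) ≤ X * ENNReal.ofReal (2 * π) := by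
    calc (∫⁻ θ, n θ ∂μ) ^ (2:ℕ)
        ≤ (X ^ ((1:ℝ)/2) * ENNReal.ofReal (2 * π) ^ ((1:ℝ)/2)) ^ (2:ℕ) :=
          pow_le_pow_left' hCS 2
      _ = X * ENNReal.ofReal (2 * π) := by
          rw [mul_pow, ← ENNReal.rpow_natCast (X ^ ((1:ℝ)/2)) 2,
            ← ENNReal.rpow_natCast (ENNReal.ofReal (2 * π) ^ ((1:ℝ)/2)) 2,
            ← ENNReal.rpow_mul, ← ENNReal.rpow_mul]
          norm_num
  have hle2 : (ENNReal.ofReal (2 * π) * (‖f c‖₊ : ℝ≥0∞)) ^ (2:ℕ)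
      ≤ X * ENNReal.ofReal (2 * π) :=
    le_trans (pow_le_pow_left' hle1 2) hsq
  have h2π0 : ENNReal.ofReal (2 * π) ≠ 0 := by
    simp [ENNReal.ofReal_eq_zero, not_le, hπ, Real.pi_pos]
  have h2πt : ENNReal.ofReal (2 * π) ≠ ⊤ := ENNReal.ofReal_ne_top
  have hfin : ENNReal.ofReal (2 * π) * (ENNReal.ofReal (2 * π) * (‖f c‖₊ : ℝ≥0∞) ^ 2)
      ≤ ENNReal.ofReal (2 * π) * X := by
    calc ENNReal.ofReal (2 * π) * (ENNReal.ofReal (2 * π) * (‖f c‖₊ : ℝ≥0∞) ^ 2)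
        = (ENNReal.ofReal (2 * π) * (‖f c‖₊ : ℝ≥0∞)) ^ (2:ℕ) := by ring
      _ ≤ X * ENNReal.ofReal (2 * π) := hle2
      _ = ENNReal.ofReal (2 * π) * X := mul_comm _ _
  exact (ENNReal.mul_le_mul_iff_right h2π0 h2πt).mp hfin

lemma submean {f : ℂ → ℂ} {c : ℂ} {r : ℝ} (hr : 0 < r)
    (hf : DifferentiableOn ℂ f (closedBall c r)) :
    (‖f c‖₊ : ℝ≥0∞) ^ 2 * volume (ball c r) ≤ ∫⁻ z in ball c r, (‖f z‖₊ : ℝ≥0∞) ^ 2 := by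
  set g : ℂ → ℝ≥0∞ := fun z => (‖f z‖₊ : ℝ≥0∞) ^ 2 with hg
  set e := Complex.measurableEquivRealProd with he
  set s : Set (ℝ × ℝ) := Ioo (0:ℝ) r ×ˢ Ioo (-π) π with hs
  set φ : ℝ × ℝ → ℝ × ℝ := fun p => (c.re, c.im) + polarCoord.symm p with hφ
  -- key: φ p = e (circleMap c p.1 p.2)
  have hφe : ∀ p : ℝ × ℝ, φ p = e (circleMap c p.1 p.2) := by
    intro p
    show ((c.re, c.im) : ℝ × ℝ) + (p.1 * Real.cos p.2, p.1 * Real.sin p.2)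
      = Complex.measurableEquivRealProd (circleMap c p.1 p.2)
    have : Complex.measurableEquivRealProd (circleMap c p.1 p.2)
        = ((circleMap c p.1 p.2).re, (circleMap c p.1 p.2).im) := rfl
    rw [this]
    simp [circleMap, Complex.exp_mul_I, Prod.ext_iff, Complex.add_re, Complex.add_im,
      Complex.mul_re, Complex.mul_im, Complex.cos_ofReal_re, Complex.sin_ofReal_re,
      Complex.cos_ofReal_im, Complex.sin_ofReal_im]
  -- derivative of φ
  set B : ℝ × ℝ → (ℝ × ℝ) →L[ℝ] (ℝ × ℝ) := fun p =>
    LinearMap.toContinuousLinearMap (Matrix.toLin (Module.Basis.finTwoProd ℝ) (Module.Basis.finTwoProd ℝ)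
      !![Real.cos p.2, -p.1 * Real.sin p.2; Real.sin p.2, p.1 * Real.cos p.2]) with hB
  have hBder : ∀ p ∈ s, HasFDerivWithinAt φ (B p) s p := fun p _ =>
    ((hasFDerivAt_polarCoord_symm p).const_add (c.re, c.im)).hasFDerivWithinAt
  have hBdet : ∀ p : ℝ × ℝ, (B p).det = p.1 := by
    intro p
    conv_rhs => rw [← one_mul p.1, ← Real.cos_sq_add_sin_sq p.2]
    simp only [hB, neg_mul, LinearMap.det_toContinuousLinearMap, LinearMap.det_toLin,
      Matrix.det_fin_two_of, sub_neg_eq_add]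
    ring
  -- injectivity
  have hsub : s ⊆ polarCoord.target := by
    rintro ⟨ρ, θ⟩ ⟨h1, h2⟩
    exact ⟨h1.1, h2⟩
  have hinj : InjOn φ s := by
    intro p hp q hq hpq
    have : polarCoord.symm p = polarCoord.symm q := by
      have := hpq
      simpa only [hφ, add_right_inj] using this
    exact polarCoord.symm.injOn (by simpa using hsub hp) (by simpa using hsub hq) this
  -- image subset
  have himg : φ '' s ⊆ e '' ball c r := by
    rintro _ ⟨p, hp, rfl⟩
    refine ⟨circleMap c p.1 p.2, ?_, (hφe p).symm⟩
    have : dist (circleMap c p.1 p.2) c = |p.1| := by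
      rw [Complex.dist_eq, circleMap_sub_center]
      simpa using abs_circleMap_zero p.1 p.2
    rw [mem_ball, this, abs_of_pos hp.1.1]
    exact hp.1.2
  -- transfer to ℝ × ℝ
  have he_mp : MeasurePreserving e := Complex.volume_preserving_equiv_real_prod
  have step1 : ∫⁻ z in ball c r, g z = ∫⁻ p in e '' ball c r, g (e.symm p) := by
    have h := he_mp.setLIntegral_comp_emb e.measurableEmbedding
      (fun p => g (e.symm p)) (ball c r)
    simpa using h
  have hsm : MeasurableSet s := measurableSet_Ioo.prod measurableSet_Ioo
  have step2 : ∫⁻ p in φ '' s, g (e.symm p)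
      = ∫⁻ p in s, ENNReal.ofReal |(B p).det| * g (e.symm (φ p)) :=
    lintegral_image_eq_lintegral_abs_det_fderiv_mul volume hsm hBder hinj _
  have hsymm : ∀ p : ℝ × ℝ, e.symm (φ p) = circleMap c p.1 p.2 := by
    intro p
    rw [hφe p, MeasurableEquiv.symm_apply_apply]
  have step3 : ∫⁻ p in s, ENNReal.ofReal |(B p).det| * g (e.symm (φ p))
      = ∫⁻ p in s, ENNReal.ofReal p.1 * g (circleMap c p.1 p.2) := by
    refine setLIntegral_congr_fun hsm ?_
    intro p hp
    beta_reduce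
    rw [hsymm p, hBdet p, abs_of_pos hp.1.1]
  -- Tonelli
  set H : ℝ × ℝ → ℝ≥0∞ := fun p => ENNReal.ofReal p.1 * g (circleMap c p.1 p.2) with hH
  have hHmeas : AEMeasurable H (volume.restrict s) := by
    have hcm : Continuous fun p : ℝ × ℝ => circleMap c p.1 p.2 := by
      show Continuous fun p : ℝ × ℝ => c + (p.1 : ℂ) * Complex.exp (p.2 * Complex.I)
      fun_prop
    have hmaps : MapsTo (fun p : ℝ × ℝ => circleMap c p.1 p.2) s (closedBall c r) := by
      intro p hp
      have : dist (circleMap c p.1 p.2) c = |p.1| := by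
        rw [Complex.dist_eq, circleMap_sub_center]
        simpa using abs_circleMap_zero p.1 p.2
      rw [mem_closedBall, this, abs_of_pos hp.1.1]
      exact hp.1.2.le
    have hfc : ContinuousOn (fun p : ℝ × ℝ => f (circleMap c p.1 p.2)) s :=
      hf.continuousOn.comp hcm.continuousOn hmaps
    have h2 : ContinuousOn (fun p : ℝ × ℝ => g (circleMap c p.1 p.2)) s :=
      (ENNReal.continuous_pow 2).comp_continuousOn
        (ENNReal.continuous_coe.comp_continuousOn hfc.nnnorm)
    exact ((ENNReal.continuous_ofReal.comp continuous_fst).measurable.aemeasurable).mul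
      (h2.aemeasurable hsm)
  have step4 : ∫⁻ p in s, H p
      = ∫⁻ ρ in Ioo (0:ℝ) r, ∫⁻ θ in Ioo (-π) π, H (ρ, θ) := by
    have hrs : (volume : Measure (ℝ × ℝ)).restrict s
        = (volume.restrict (Ioo (0:ℝ) r)).prod (volume.restrict (Ioo (-π) π)) := by
      rw [Measure.prod_restrict, ← hs, Measure.volume_eq_prod]
    rw [hrs]
    rw [hrs] at hHmeas
    exact lintegral_prod H hHmeas
  -- lower bound the inner integral
  have hinner : ∀ ρ ∈ Ioo (0:ℝ) r,
      ENNReal.ofReal ρ * (ENNReal.ofReal (2 * π) * (‖f c‖₊ : ℝ≥0∞) ^ 2)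
        ≤ ∫⁻ θ in Ioo (-π) π, H (ρ, θ) := by
    intro ρ hρ
    have h1 : ∫⁻ θ in Ioo (-π) π, H (ρ, θ)
        = ENNReal.ofReal ρ * ∫⁻ θ in Ioo (-π) π, g (circleMap c ρ θ) :=
      lintegral_const_mul' _ _ ENNReal.ofReal_ne_top
    rw [h1]
    exact mul_le_mul_right (stepA hρ.1
      (hf.mono (closedBall_subset_closedBall hρ.2.le))) _
  -- radial integral
  set C : ℝ≥0∞ := ENNReal.ofReal (2 * π) * (‖f c‖₊ : ℝ≥0∞) ^ 2 with hC
  have hCne : C ≠ ⊤ :=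
    ENNReal.mul_ne_top ENNReal.ofReal_ne_top (ENNReal.pow_ne_top ENNReal.coe_ne_top)
  have hrad : ∫⁻ ρ in Ioo (0:ℝ) r, ENNReal.ofReal ρ = ENNReal.ofReal (r ^ 2 / 2) := by
    have hInt : IntegrableOn (fun x : ℝ => x) (Ioo (0:ℝ) r) :=
      (intervalIntegral.intervalIntegrable_id (μ := volume) (a := (0:ℝ)) (b := r)).1.mono_set
        Ioo_subset_Ioc_self
    rw [← ofReal_integral_eq_lintegral_ofReal hInt
      ((ae_restrict_iff' measurableSet_Ioo).2 (ae_of_all _ fun x hx => hx.1.le))]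
    congr 1
    rw [setIntegral_congr_set Ioo_ae_eq_Ioc, ← intervalIntegral.integral_of_le hr.le,
      integral_id]
    norm_num
  have hfinal : ∫⁻ ρ in Ioo (0:ℝ) r, ∫⁻ θ in Ioo (-π) π, H (ρ, θ)
      ≥ (‖f c‖₊ : ℝ≥0∞) ^ 2 * volume (ball c r) := by
    have h1 : ∫⁻ ρ in Ioo (0:ℝ) r, ENNReal.ofReal ρ * C
        ≤ ∫⁻ ρ in Ioo (0:ℝ) r, ∫⁻ θ in Ioo (-π) π, H (ρ, θ) :=
      setLIntegral_mono_ae' measurableSet_Ioo (ae_of_all _ hinner)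
    refine le_trans (le_of_eq ?_) h1
    rw [lintegral_mul_const' C _ hCne, hrad]
    rw [Complex.volume_ball]
    have hπ : (NNReal.pi : ℝ≥0∞) = ENNReal.ofReal π := by
      rw [← NNReal.coe_real_pi, ENNReal.ofReal_coe_nnreal]
    rw [hπ, hC, ← ENNReal.ofReal_pow hr.le, ← ENNReal.ofReal_mul (by positivity),
      ← mul_assoc, ← ENNReal.ofReal_mul (by positivity), mul_comm]
    congr 2
    ring
  calc (‖f c‖₊ : ℝ≥0∞) ^ 2 * volume (ball c r)
      ≤ ∫⁻ ρ in Ioo (0:ℝ) r, ∫⁻ θ in Ioo (-π) π, H (ρ, θ) := hfinal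
    _ = ∫⁻ p in s, H p := step4.symm
    _ = ∫⁻ p in s, ENNReal.ofReal |(B p).det| * g (e.symm (φ p)) := step3.symm
    _ = ∫⁻ p in φ '' s, g (e.symm p) := step2.symm
    _ ≤ ∫⁻ p in e '' ball c r, g (e.symm p) := lintegral_mono_set himg
    _ = ∫⁻ z in ball c r, g z := step1.symm

/-- The discretization upper bound (estimate (3.3)/(3.4) in the proof of the Lusin frame
theorem): if the balls `B_j = B(q_j, ε·d(q_j))`, `q_j ∈ Ω`, overlap at most `N` times,
then for every holomorphic `F` on `Ω`,
`Σ_j d(q_j)^{2k−1} m(B_j) |F^{(k)}(q_j)|² ≤ 2^{2k−1} N ∫_Ω |F^{(k)}|² d^{2k−1} dA`. -/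
theorem statement17
    (Ω : Set ℂ) (hΩ : IsOpen Ω) (hne : Ω.Nonempty) (hproper : Ω ≠ Set.univ)
    (k : ℕ) (hk : 1 ≤ k) (ε : ℝ) (hε0 : 0 < ε) (hε : ε ≤ 1 / 2)
    (q : ℕ → ℂ) (hq : ∀ j, q j ∈ Ω) (N : ℕ)
    (hN : ∀ y : ℂ, ∀ s : Finset ℕ,
      (∀ j ∈ s, y ∈ ball (q j) (ε * infDist (q j) (frontier Ω))) → s.card ≤ N)
    (F : ℂ → ℂ) (hF : DifferentiableOn ℂ F Ω) :
    (∑' j : ℕ,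
        ENNReal.ofReal (infDist (q j) (frontier Ω) ^ (2 * k - 1)) *
          volume (ball (q j) (ε * infDist (q j) (frontier Ω))) *
            (‖iteratedDeriv k F (q j)‖₊ : ℝ≥0∞) ^ 2) ≤
      2 ^ (2 * k - 1) * (N : ℝ≥0∞) *
        ∫⁻ z in Ω, (‖iteratedDeriv k F z‖₊ : ℝ≥0∞) ^ 2 *
          ENNReal.ofReal (infDist z (frontier Ω) ^ (2 * k - 1)) := by
  set d : ℂ → ℝ := fun z => infDist z (frontier Ω) with hd
  have hfront : (frontier Ω).Nonempty := nonempty_frontier_iff.mpr ⟨hne, hproper⟩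
  have hdpos : ∀ z ∈ Ω, 0 < d z := by
    intro z hz
    refine (IsClosed.notMem_iff_infDist_pos isClosed_frontier hfront).mp ?_
    rw [hΩ.frontier_eq]
    exact fun h => h.2 hz
  -- balls are inside Ω
  have hball : ∀ z ∈ Ω, ball z (d z) ⊆ Ω := by
    intro z hz
    have h1 : ball z (d z) ⊆ (frontier Ω)ᶜ := ball_infDist_subset_compl
    have h2 : ball z (d z) ⊆ Ω ∪ (closure Ω)ᶜ := by
      intro x hx
      by_cases hxc : x ∈ closure Ω
      · left
        by_contra hxo
        exact h1 hx (by rw [hΩ.frontier_eq]; exact ⟨hxc, hxo⟩)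
      · exact Or.inr hxc
    refine IsPreconnected.subset_left_of_subset_union hΩ
      (isClosed_closure.isOpen_compl)
      (disjoint_compl_right.mono_left subset_closure)
      h2 ⟨z, mem_ball_self (hdpos z hz), hz⟩
      (convex_ball z (d z)).isPreconnected
  have hcb : ∀ j, closedBall (q j) (ε * d (q j)) ⊆ Ω := by
    intro j
    refine (closedBall_subset_ball ?_).trans (hball (q j) (hq j))
    have := hdpos (q j) (hq j)
    nlinarith
  -- iterated derivative is analytic on Ω
  have hGanal : ∀ n, AnalyticOnNhd ℂ (iteratedDeriv n F) Ω := by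
    intro n
    induction n with
    | zero => simpa [iteratedDeriv_zero] using hF.analyticOnNhd hΩ
    | succ n ih =>
        rw [iteratedDeriv_succ]
        exact ih.deriv
  set G : ℂ → ℂ := iteratedDeriv k F with hG
  have hGdiff : DifferentiableOn ℂ G Ω := (hGanal k).differentiableOn
  have hGcont : ContinuousOn G Ω := hGdiff.continuousOn
  set W : ℂ → ℝ≥0∞ := fun z => (‖G z‖₊ : ℝ≥0∞) ^ 2 * ENNReal.ofReal (d z ^ (2 * k - 1))
    with hW
  set Bl : ℕ → Set ℂ := fun j => ball (q j) (ε * d (q j)) with hBl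
  have hrpos : ∀ j, 0 < ε * d (q j) := fun j => mul_pos hε0 (hdpos (q j) (hq j))
  -- per-ball estimate
  have hterm : ∀ j, ENNReal.ofReal (d (q j) ^ (2 * k - 1)) * volume (Bl j) *
      (‖G (q j)‖₊ : ℝ≥0∞) ^ 2 ≤ 2 ^ (2 * k - 1) * ∫⁻ z in Bl j, W z := by
    intro j
    have hsm : (‖G (q j)‖₊ : ℝ≥0∞) ^ 2 * volume (Bl j) ≤ ∫⁻ z in Bl j, (‖G z‖₊ : ℝ≥0∞) ^ 2 :=
      submean (hrpos j) (hGdiff.mono (hcb j))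
    calc ENNReal.ofReal (d (q j) ^ (2 * k - 1)) * volume (Bl j) * (‖G (q j)‖₊ : ℝ≥0∞) ^ 2
        = ENNReal.ofReal (d (q j) ^ (2 * k - 1)) *
            ((‖G (q j)‖₊ : ℝ≥0∞) ^ 2 * volume (Bl j)) := by ring
      _ ≤ ENNReal.ofReal (d (q j) ^ (2 * k - 1)) * ∫⁻ z in Bl j, (‖G z‖₊ : ℝ≥0∞) ^ 2 :=
          mul_le_mul_right hsm _
      _ = ∫⁻ z in Bl j, ENNReal.ofReal (d (q j) ^ (2 * k - 1)) * (‖G z‖₊ : ℝ≥0∞) ^ 2 :=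
          (lintegral_const_mul' _ _ ENNReal.ofReal_ne_top).symm
      _ ≤ ∫⁻ z in Bl j, 2 ^ (2 * k - 1) * W z := by
          refine setLIntegral_mono' measurableSet_ball ?_
          intro z hz
          have hdq : d (q j) ≤ 2 * d z := by
            have h1 : d (q j) ≤ d z + dist (q j) z :=
              infDist_le_infDist_add_dist
            have h2 : dist (q j) z < ε * d (q j) := by
              rw [dist_comm]; exact mem_ball.mp hz
            have h3 : ε * d (q j) ≤ d (q j) / 2 := by
              have := (hdpos (q j) (hq j)).le
              nlinarith
            linarith
          have hpow : d (q j) ^ (2 * k - 1) ≤ 2 ^ (2 * k - 1) * d z ^ (2 * k - 1) := by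
            calc d (q j) ^ (2 * k - 1) ≤ (2 * d z) ^ (2 * k - 1) :=
                  pow_le_pow_left₀ (hdpos (q j) (hq j)).le hdq _
              _ = 2 ^ (2 * k - 1) * d z ^ (2 * k - 1) := mul_pow _ _ _
          calc ENNReal.ofReal (d (q j) ^ (2 * k - 1)) * (‖G z‖₊ : ℝ≥0∞) ^ 2
              ≤ ENNReal.ofReal (2 ^ (2 * k - 1) * d z ^ (2 * k - 1)) *
                  (‖G z‖₊ : ℝ≥0∞) ^ 2 :=
                mul_le_mul_left (ENNReal.ofReal_le_ofReal hpow) _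
            _ = 2 ^ (2 * k - 1) * W z := by
                rw [hW, ENNReal.ofReal_mul (by positivity)]
                rw [ENNReal.ofReal_pow (by norm_num : (0:ℝ) ≤ 2)]
                norm_num
                ring
      _ = 2 ^ (2 * k - 1) * ∫⁻ z in Bl j, W z :=
          lintegral_const_mul' _ _ (by simp [ENNReal.pow_ne_top])
  -- summation with bounded overlap
  have hBlΩ : ∀ j, Bl j ⊆ Ω := fun j => ball_subset_closedBall.trans (hcb j)
  have hWind : ∀ j, AEMeasurable ((Bl j).indicator W) volume := by
    intro j
    refine (aemeasurable_indicator_iff measurableSet_ball).mpr ?_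
    have f1 : ContinuousOn (fun z => (‖G z‖₊ : ℝ≥0∞) ^ 2) (Bl j) :=
      (ENNReal.continuous_pow 2).comp_continuousOn
        (ENNReal.continuous_coe.comp_continuousOn (hGcont.mono (hBlΩ j)).nnnorm)
    have f2 : Measurable (fun z : ℂ => ENNReal.ofReal (d z ^ (2 * k - 1))) :=
      (ENNReal.continuous_ofReal.comp ((continuous_infDist_pt _).pow _)).measurable
    exact (f1.aemeasurable measurableSet_ball).mul f2.aemeasurable
  have hsum : ∑' j, ∫⁻ z in Bl j, W z ≤ (N : ℝ≥0∞) * ∫⁻ z in Ω, W z := by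
    have h1 : ∑' j, ∫⁻ z in Bl j, W z = ∫⁻ z, ∑' j, (Bl j).indicator W z := by
      rw [lintegral_tsum hWind]
      congr 1
      funext j
      exact (lintegral_indicator measurableSet_ball W).symm
    have hpt : ∀ z, ∑' j, (Bl j).indicator W z ≤ (N : ℝ≥0∞) * Ω.indicator W z := by
      intro z
      by_cases hz : z ∈ Ω
      · have heq : ∀ j, (Bl j).indicator W z
            = (Bl j).indicator (1 : ℂ → ℝ≥0∞) z * W z := by
          intro j
          by_cases h : z ∈ Bl j <;> simp [h]
        rw [tsum_congr heq, ENNReal.tsum_mul_right, indicator_of_mem hz]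
        refine mul_le_mul_left ?_ _
        have hfin : ∀ s : Finset ℕ, ∑ j ∈ s, (Bl j).indicator (1 : ℂ → ℝ≥0∞) z
            ≤ (N : ℝ≥0∞) := by
          intro s
          classical
          have heq2 : ∑ j ∈ s, (Bl j).indicator (1 : ℂ → ℝ≥0∞) z
              = ((s.filter (fun j => z ∈ Bl j)).card : ℝ≥0∞) := by
            rw [Finset.card_eq_sum_ones, Nat.cast_sum]
            rw [Finset.sum_filter]
            congr 1
            funext j
            by_cases h : z ∈ Bl j <;> simp [h, indicator]
          rw [heq2]
          exact_mod_cast Nat.cast_le.mpr (hN z _ (fun j hj => (Finset.mem_filter.mp hj).2))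
        rw [ENNReal.tsum_eq_iSup_sum]
        exact iSup_le hfin
      · have hzero : ∀ j, (Bl j).indicator W z = 0 :=
          fun j => indicator_of_notMem (fun h => hz (hBlΩ j h)) _
        simp [hzero, indicator_of_notMem hz]
    calc ∑' j, ∫⁻ z in Bl j, W z
        = ∫⁻ z, ∑' j, (Bl j).indicator W z := h1
      _ ≤ ∫⁻ z, (N : ℝ≥0∞) * Ω.indicator W z := lintegral_mono hpt
      _ = (N : ℝ≥0∞) * ∫⁻ z, Ω.indicator W z :=
          lintegral_const_mul' _ _ (ENNReal.natCast_ne_top N)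
      _ = (N : ℝ≥0∞) * ∫⁻ z in Ω, W z := by
          rw [lintegral_indicator hΩ.measurableSet W]
  calc (∑' j : ℕ, ENNReal.ofReal (d (q j) ^ (2 * k - 1)) * volume (Bl j) *
          (‖G (q j)‖₊ : ℝ≥0∞) ^ 2)
      ≤ ∑' j : ℕ, 2 ^ (2 * k - 1) * ∫⁻ z in Bl j, W z := ENNReal.tsum_le_tsum hterm
    _ = 2 ^ (2 * k - 1) * ∑' j : ℕ, ∫⁻ z in Bl j, W z := ENNReal.tsum_mul_left
    _ ≤ 2 ^ (2 * k - 1) * ((N : ℝ≥0∞) * ∫⁻ z in Ω, W z) := mul_le_mul_right hsum _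
    _ = 2 ^ (2 * k - 1) * (N : ℝ≥0∞) * ∫⁻ z in Ω, W z := (mul_assoc _ _ _).symm
end

section
/- Fix ε ∈ (0, 1/6]. For integers l ≥ 0 let n_l = ⌈2πε⁻¹(1 + (1+ε)^l)⌉, r_l = 1 + (1+ε)^{−l}, and for 1 ≤ j ≤ n_l let θ_{j,l} = −π + (2π/n_l)j, p_{j,l} = r_l e^{iθ_{j,l}}, φ_{j,l} = −π + (2π/n_l)(j − 1/2); set R_{−1} = (4+ε)/2 and R_l = (r_l + r_{l+1})/2 for l ≥ 0, and define the annular sector P_{j,l} = {re^{iφ} : R_l ≤ r ≤ R_{l−1}, φ_{j,l} ≤ φ ≤ φ_{j+1,l}} (angles taken modulo 2π for j = n_l). Then, with B_{j,l} = B(p_{j,l}, (3/2)ε·dist(p_{j,l},𝕋)) where 𝕋 is the unit circle and dist(p_{j,l},𝕋) = (1+ε)^{−l}: (a) P_{j,l} ⊆ B_{j,l}, and (b) m(P_{j,l}) ≥ (4/(27π))·m(B_{j,l}), where m is planar Lebesgue measure. -/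
open MeasureTheory Metric Set
open scoped ENNReal NNReal

noncomputable section

/-- `n_l = ⌈2πε⁻¹(1+(1+ε)^l)⌉`. -/
def nl (ε : ℝ) (l : ℕ) : ℕ := ⌈2 * Real.pi * ε⁻¹ * (1 + (1 + ε) ^ l)⌉₊

/-- `r_l = 1 + (1+ε)^{-l}`. -/
def rl (ε : ℝ) (l : ℕ) : ℝ := 1 + ((1 + ε) ^ l)⁻¹

/-- `θ_{j,l} = -π + (2π/n_l) j`. -/
def θjl (ε : ℝ) (j l : ℕ) : ℝ := -Real.pi + 2 * Real.pi / (nl ε l) * j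

/-- `p_{j,l} = r_l e^{iθ_{j,l}}`. -/
def pjl (ε : ℝ) (j l : ℕ) : ℂ := (rl ε l : ℂ) * Complex.exp ((θjl ε j l : ℂ) * Complex.I)

/-- `R_l = (r_l + r_{l+1})/2` for `l ≥ 0`. -/
def Rl (ε : ℝ) (l : ℕ) : ℝ := (rl ε l + rl ε (l + 1)) / 2

/-- `R_{l-1}`, with the convention `R_{-1} = (4+ε)/2`. -/
def Rprev (ε : ℝ) (l : ℕ) : ℝ := if l = 0 then (4 + ε) / 2 else Rl ε (l - 1)

/-- Half-shifted angles `φ_{j,l} = -π + (2π/n_l)(j − 1/2)` (`j` a real parameter). -/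
def φjl (ε : ℝ) (l : ℕ) (j : ℝ) : ℝ := -Real.pi + 2 * Real.pi / (nl ε l) * (j - 1 / 2)

/-- The annular sector `P_{j,l} = {re^{iφ} : R_l ≤ r ≤ R_{l−1}, φ_{j,l} ≤ φ ≤ φ_{j+1,l}}`. -/
def Pjl (ε : ℝ) (j l : ℕ) : Set ℂ :=
  {z | ∃ ρ φ : ℝ, Rl ε l ≤ ρ ∧ ρ ≤ Rprev ε l ∧
    φjl ε l j ≤ φ ∧ φ ≤ φjl ε l ((j : ℝ) + 1) ∧
    z = (ρ : ℂ) * Complex.exp ((φ : ℂ) * Complex.I)}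

/-! ### Auxiliary lemmas -/

lemma aux_norm_exp_mul_I (t : ℝ) : ‖Complex.exp ((t : ℂ) * Complex.I)‖ = 1 := by
  simp

lemma aux_chord (t : ℝ) : ‖Complex.exp ((t : ℂ) * Complex.I) - 1‖ ≤ |t| := by
  have h : ‖Complex.exp ((t : ℂ) * Complex.I) - 1‖ ^ 2 = 2 - 2 * Real.cos t := by
    rw [Complex.exp_mul_I, ← Complex.ofReal_cos, ← Complex.ofReal_sin,
      Complex.sq_norm, Complex.normSq_apply]
    simp only [Complex.add_re, Complex.add_im, Complex.sub_re, Complex.sub_im,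
      Complex.ofReal_re, Complex.ofReal_im, Complex.mul_re, Complex.mul_im,
      Complex.I_re, Complex.I_im, Complex.one_re, Complex.one_im]
    nlinarith [Real.sin_sq_add_cos_sq t]
  have hc : 1 - t ^ 2 / 2 ≤ Real.cos t := Real.one_sub_sq_div_two_le_cos
  have h2 : ‖Complex.exp ((t : ℂ) * Complex.I) - 1‖ ^ 2 ≤ |t| ^ 2 := by
    rw [h, sq_abs]; nlinarith
  nlinarith [norm_nonneg (Complex.exp ((t : ℂ) * Complex.I) - 1), abs_nonneg t]

lemma aux_dist_exp_exp (s t : ℝ) :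
    ‖Complex.exp ((s : ℂ) * Complex.I) - Complex.exp ((t : ℂ) * Complex.I)‖ ≤ |s - t| := by
  have h : Complex.exp ((s : ℂ) * Complex.I) - Complex.exp ((t : ℂ) * Complex.I)
      = Complex.exp ((t : ℂ) * Complex.I) * (Complex.exp (((s - t : ℝ) : ℂ) * Complex.I) - 1) := by
    rw [mul_sub, ← Complex.exp_add, mul_one]
    push_cast; ring_nf
  rw [h, norm_mul, aux_norm_exp_mul_I, one_mul]
  exact aux_chord _

lemma aux_infDist_sphere (w : ℂ) (hw : 1 ≤ ‖w‖) :
    infDist w (sphere (0 : ℂ) 1) = ‖w‖ - 1 := by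
  have hwpos : (0 : ℝ) < ‖w‖ := by linarith
  apply le_antisymm
  · have hmem : (‖w‖ : ℂ)⁻¹ * w ∈ sphere (0 : ℂ) 1 := by
      simp only [mem_sphere_iff_norm, sub_zero, norm_mul, norm_inv, Complex.norm_real,
        Real.norm_eq_abs, abs_of_pos hwpos]
      exact inv_mul_cancel₀ hwpos.ne'
    refine le_trans (infDist_le_dist_of_mem hmem) ?_
    rw [dist_eq_norm]
    have h1 : w - (‖w‖ : ℂ)⁻¹ * w = ((1 - ‖w‖⁻¹ : ℝ) : ℂ) * w := by
      push_cast; ring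
    rw [h1, norm_mul, Complex.norm_real, Real.norm_eq_abs,
      abs_of_nonneg (by rw [sub_nonneg]; exact inv_le_one_of_one_le₀ hw)]
    rw [sub_mul, one_mul, inv_mul_cancel₀ hwpos.ne']
  · by_contra hlt
    push_neg at hlt
    obtain ⟨y, hy, hdy⟩ := (infDist_lt_iff ⟨1, by simp⟩).1 hlt
    rw [mem_sphere_iff_norm, sub_zero] at hy
    rw [dist_eq_norm] at hdy
    have h2 := norm_sub_norm_le w y
    rw [hy] at h2
    linarith

def auxSector (a b c d : ℝ) : Set ℂ :=
  {z | ∃ ρ ψ : ℝ, a ≤ ρ ∧ ρ ≤ b ∧ c ≤ ψ ∧ ψ ≤ d ∧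
    z = (ρ : ℂ) * Complex.exp ((ψ : ℂ) * Complex.I)}

lemma auxSector_eq (a b c d : ℝ) :
    auxSector a b c d = Complex.measurableEquivRealProd ⁻¹'
      (polarCoord.symm '' (Icc a b ×ˢ Icc c d)) := by
  ext z
  constructor
  · rintro ⟨ρ, ψ, h1, h2, h3, h4, rfl⟩
    refine ⟨(ρ, ψ), ⟨⟨h1, h2⟩, h3, h4⟩, ?_⟩
    simp only [polarCoord_symm_apply, Complex.measurableEquivRealProd_apply]
    rw [Complex.mul_re, Complex.mul_im]
    simp [Complex.exp_ofReal_mul_I_re, Complex.exp_ofReal_mul_I_im]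
  · rintro ⟨⟨ρ, ψ⟩, ⟨⟨h1, h2⟩, h3, h4⟩, hz⟩
    refine ⟨ρ, ψ, h1, h2, h3, h4, ?_⟩
    simp only [polarCoord_symm_apply, Complex.measurableEquivRealProd_apply, Prod.ext_iff] at hz
    apply Complex.ext
    · rw [Complex.mul_re]
      simp [Complex.exp_ofReal_mul_I_re, Complex.exp_ofReal_mul_I_im, ← hz.1]
    · rw [Complex.mul_im]
      simp [Complex.exp_ofReal_mul_I_re, Complex.exp_ofReal_mul_I_im, ← hz.2]

lemma aux_polarCoord_symm_continuous : Continuous (polarCoord.symm : ℝ × ℝ → ℝ × ℝ) := by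
  have h : (polarCoord.symm : ℝ × ℝ → ℝ × ℝ)
      = fun p => (p.1 * Real.cos p.2, p.1 * Real.sin p.2) := by
    funext p; exact polarCoord_symm_apply p
  rw [h]; fun_prop

lemma auxSector_measurableSet (a b c d : ℝ) : MeasurableSet (auxSector a b c d) := by
  rw [auxSector_eq]
  apply Complex.measurableEquivRealProd.measurable
  exact (((isCompact_Icc).prod isCompact_Icc).image aux_polarCoord_symm_continuous).measurableSet

open Real in
lemma auxSector_volume {a b c d : ℝ} (ha : 0 < a) (hab : a ≤ b) (hc : -π < c) (hcd : c ≤ d)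
    (hd : d < π) :
    volume (auxSector a b c d) = ENNReal.ofReal (d - c) * ENNReal.ofReal ((b ^ 2 - a ^ 2) / 2) := by
  rw [auxSector_eq,
    Complex.volume_preserving_equiv_real_prod.measure_preimage_equiv]
  set K : Set (ℝ × ℝ) := Icc a b ×ˢ Icc c d with hK
  set B : ℝ × ℝ → ℝ × ℝ →L[ℝ] ℝ × ℝ := fun p =>
    LinearMap.toContinuousLinearMap (Matrix.toLin (Module.Basis.finTwoProd ℝ) (Module.Basis.finTwoProd ℝ)
      !![cos p.2, -p.1 * sin p.2; sin p.2, p.1 * cos p.2]) with hB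
  have B_det : ∀ p, (B p).det = p.1 := by
    intro p
    conv_rhs => rw [← one_mul p.1, ← cos_sq_add_sin_sq p.2]
    simp only [hB, neg_mul, LinearMap.det_toContinuousLinearMap, LinearMap.det_toLin,
      Matrix.det_fin_two_of, sub_neg_eq_add]
    ring
  have hKmeas : MeasurableSet K := measurableSet_Icc.prod measurableSet_Icc
  have hKsub : K ⊆ polarCoord.target := by
    rintro ⟨ρ, ψ⟩ ⟨hρ, hψ⟩
    simp only [mem_Icc] at hρ hψ
    exact ⟨lt_of_lt_of_le ha hρ.1, lt_of_lt_of_le hc hψ.1, lt_of_le_of_lt hψ.2 hd⟩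
  have hderiv : ∀ p ∈ K, HasFDerivWithinAt (polarCoord.symm : ℝ × ℝ → ℝ × ℝ) (B p) K p :=
    fun p _ => (hasFDerivAt_polarCoord_symm p).hasFDerivWithinAt
  have hinj : InjOn (polarCoord.symm : ℝ × ℝ → ℝ × ℝ) K := by
    have h := polarCoord.symm.injOn
    rw [OpenPartialHomeomorph.symm_source] at h
    exact h.mono hKsub
  rw [← lintegral_abs_det_fderiv_eq_addHaar_image volume hKmeas hderiv hinj]
  have hcongr : ∀ p ∈ K, ENNReal.ofReal |(B p).det| = ENNReal.ofReal p.1 := by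
    rintro ⟨ρ, ψ⟩ hp
    rw [B_det]
    simp only [hK, mem_prod, mem_Icc] at hp
    rw [abs_of_pos (lt_of_lt_of_le ha hp.1.1)]
  rw [setLIntegral_congr_fun hKmeas hcongr]
  rw [hK, Measure.volume_eq_prod, ← Measure.prod_restrict]
  rw [lintegral_prod _ (by fun_prop)]
  simp only [lintegral_const, Measure.restrict_apply_univ, Real.volume_Icc]
  rw [lintegral_mul_const _ (by fun_prop)]
  have h1 : ∫⁻ x in Icc a b, ENNReal.ofReal x = ENNReal.ofReal ((b ^ 2 - a ^ 2) / 2) := by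
    rw [← ofReal_integral_eq_lintegral_ofReal]
    · rw [MeasureTheory.integral_Icc_eq_integral_Ioc, ← intervalIntegral.integral_of_le hab,
        integral_id]
    · exact (intervalIntegrable_iff_integrableOn_Icc_of_le hab).1
        intervalIntegral.intervalIntegrable_id
    · filter_upwards [ae_restrict_mem measurableSet_Icc] with x hx
      exact le_trans ha.le hx.1
  rw [h1, mul_comm]

lemma aux_rot_volume (θ : ℝ) (S : Set ℂ) (hS : MeasurableSet S) :
    volume ((fun z => Complex.exp ((θ : ℂ) * Complex.I) * z) '' S) = volume S := by
  have hfun : (fun z => Complex.exp ((θ : ℂ) * Complex.I) * z) = ⇑(rotation (Circle.exp θ)) := by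
    funext z
    rw [rotation_apply, Circle.coe_exp]
  rw [hfun]
  have himg : ⇑(rotation (Circle.exp θ)) '' S = ⇑((rotation (Circle.exp θ)).symm) ⁻¹' S := by
    ext z
    constructor
    · rintro ⟨x, hx, rfl⟩
      show (rotation (Circle.exp θ)).symm ((rotation (Circle.exp θ)) x) ∈ S
      rw [LinearIsometryEquiv.symm_apply_apply]; exact hx
    · intro hz
      exact ⟨(rotation (Circle.exp θ)).symm z, hz, LinearIsometryEquiv.apply_symm_apply _ _⟩
  rw [himg]
  exact ((rotation (Circle.exp θ)).symm.measurePreserving).measure_preimage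
    hS.nullMeasurableSet

/-! ### Main theorem -/

open Real in
set_option maxHeartbeats 4000000 in
/-- Geometry of the annular sectors (Appendix C). -/
theorem statement19 (ε : ℝ) (hε0 : 0 < ε) (hε : ε ≤ 1 / 6) :
    ∀ l j : ℕ, 1 ≤ j → j ≤ nl ε l →
      (Pjl ε j l ⊆
        ball (pjl ε j l) (3 / 2 * ε * infDist (pjl ε j l) (sphere (0 : ℂ) 1))) ∧
      (ENNReal.ofReal (4 / (27 * Real.pi)) *
          volume (ball (pjl ε j l) (3 / 2 * ε * infDist (pjl ε j l) (sphere (0 : ℂ) 1))) ≤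
        volume (Pjl ε j l)) := by
  intro l j hj1 hj2
  have hπ : (3.14 : ℝ) < π := pi_gt_d2
  have h1ε : (0 : ℝ) < 1 + ε := by linarith
  set δ : ℝ := ((1 + ε) ^ l)⁻¹ with hδdef
  have hpowpos : (0 : ℝ) < (1 + ε) ^ l := pow_pos h1ε l
  have hδ0 : 0 < δ := inv_pos.2 hpowpos
  have hδ1 : δ ≤ 1 := by
    rw [hδdef]
    exact inv_le_one_of_one_le₀ (one_le_pow₀ (by linarith))
  have hrl : rl ε l = 1 + δ := rfl
  have hεδ0 : 0 < ε * δ := mul_pos hε0 hδ0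
  -- exact values of Rprev and Rl
  have hRp : Rprev ε l = 1 + δ + ε * δ / 2 := by
    rcases Nat.eq_zero_or_pos l with h0 | hl
    · subst h0
      have h1 : δ = 1 := by rw [hδdef, pow_zero, inv_one]
      rw [show Rprev ε 0 = (4 + ε) / 2 from if_pos rfl, h1]
      ring
    · have hl1 : l - 1 + 1 = l := Nat.succ_pred_eq_of_pos hl
      have hrk : rl ε (l - 1) = 1 + (1 + ε) * δ := by
        rw [rl, hδdef]
        congr 1
        conv_rhs => rw [← hl1, pow_succ, mul_inv]
        field_simp
      simp only [Rprev, if_neg (by omega : l ≠ 0), Rl]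
      rw [hl1, hrk, hrl]
      ring
  have hRlv : Rl ε l = 1 + δ - ε * δ / (2 * (1 + ε)) := by
    have hrl1 : rl ε (l + 1) = 1 + δ / (1 + ε) := by
      rw [rl, hδdef, pow_succ, mul_inv, div_eq_mul_inv]
    rw [Rl, hrl, hrl1]
    field_simp
    ring
  -- bounds on n
  set A : ℝ := 2 * π * ε⁻¹ * (1 + (1 + ε) ^ l) with hAdef
  have hnlA : (nl ε l : ℝ) = (⌈A⌉₊ : ℝ) := rfl
  have hAεδ : A * (ε * δ) = 2 * π * (1 + δ) := by
    rw [hAdef, hδdef]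
    have h2 : (1 + (1 + ε) ^ l) * ((1 + ε) ^ l)⁻¹ = ((1 + ε) ^ l)⁻¹ + 1 := by
      field_simp
    field_simp
    ring
  have hA75 : (75 : ℝ) ≤ A := by
    have h6 : (6 : ℝ) ≤ ε⁻¹ := by
      rw [le_inv_comm₀ (by norm_num) hε0]; linarith
    have hp1 : (1 : ℝ) ≤ (1 + ε) ^ l := one_le_pow₀ (by linarith)
    have hm : (6 : ℝ) * 2 ≤ ε⁻¹ * (1 + (1 + ε) ^ l) := by nlinarith
    have h2π : (0 : ℝ) ≤ 2 * π := by positivity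
    have := mul_le_mul_of_nonneg_left hm h2π
    rw [hAdef]
    nlinarith
  have hA0 : 0 < A := by linarith
  have hnA : A ≤ (nl ε l : ℝ) := by rw [hnlA]; exact_mod_cast Nat.le_ceil A
  have hnub : (nl ε l : ℝ) ≤ (76 / 75) * A := by
    rw [hnlA]
    have h1 : (⌈A⌉₊ : ℝ) < A + 1 := Nat.ceil_lt_add_one hA0.le
    linarith
  have hn0 : (0 : ℝ) < (nl ε l : ℝ) := lt_of_lt_of_le (by linarith) hnA
  set N : ℝ := (nl ε l : ℝ) with hNdef
  -- key: π * (2 * (1+δ)) ≤ N * (ε * δ)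
  have hkey : π * (2 * (1 + δ)) ≤ N * (ε * δ) := by
    have := mul_le_mul_of_nonneg_right hnA hεδ0.le
    rw [hAεδ] at this
    linarith
  -- norm of p and infDist
  have hnormp : ‖pjl ε j l‖ = 1 + δ := by
    rw [pjl, norm_mul, aux_norm_exp_mul_I, mul_one, hrl, Complex.norm_real,
      Real.norm_eq_abs, abs_of_pos (by linarith)]
  have hinf : infDist (pjl ε j l) (sphere (0 : ℂ) 1) = δ := by
    rw [aux_infDist_sphere _ (by rw [hnormp]; linarith), hnormp]
    ring
  -- Rl/Rprev inequalities
  have hq2 : ε * δ / (2 * (1 + ε)) ≤ ε * δ / 2 := by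
    apply div_le_div_of_nonneg_left hεδ0.le (by norm_num)
    linarith
  have hq0 : 0 < ε * δ / (2 * (1 + ε)) := by positivity
  have hq1 : (3 / 7) * (ε * δ) ≤ ε * δ / (2 * (1 + ε)) := by
    rw [le_div_iff₀ (by linarith : (0:ℝ) < 2 * (1 + ε))]
    nlinarith
  have hεδle : ε * δ ≤ δ := by nlinarith
  have hRl1 : (1 : ℝ) ≤ Rl ε l := by rw [hRlv]; linarith
  have hRlle : Rl ε l ≤ Rprev ε l := by rw [hRlv, hRp]; linarith
  -- θ and φ relation
  set θ : ℝ := θjl ε j l with hθdef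
  have hφj : φjl ε l (j : ℝ) = θ - π / N := by
    rw [φjl, hθdef, θjl, hNdef]
    ring
  have hφj1 : φjl ε l ((j : ℝ) + 1) = θ + π / N := by
    rw [φjl, hθdef, θjl, hNdef]
    ring
  have hπN0 : 0 < π / N := by positivity
  have hπNle : π / N * (1 + δ) ≤ ε * δ / 2 := by
    rw [div_mul_eq_mul_div, div_le_iff₀ hn0]
    nlinarith
  -- part (a)
  have hpart_a : Pjl ε j l ⊆
      ball (pjl ε j l) (3 / 2 * ε * infDist (pjl ε j l) (sphere (0 : ℂ) 1)) := by
    rintro z ⟨ρ, φ, hρ1, hρ2, hφ1, hφ2, rfl⟩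
    rw [hinf, mem_ball, dist_eq_norm]
    have hρpos : (0 : ℝ) < ρ := lt_of_lt_of_le (by linarith) hρ1
    have hρub : ρ ≤ 1 + δ + ε * δ / 2 := by rw [hRp] at hρ2; linarith
    have hρlb : 1 + δ - ε * δ / 2 ≤ ρ := by
      rw [hRlv] at hρ1; linarith
    have hsplit : (ρ : ℂ) * Complex.exp ((φ : ℂ) * Complex.I) - pjl ε j l
        = (ρ : ℂ) * (Complex.exp ((φ : ℂ) * Complex.I) - Complex.exp ((θ : ℂ) * Complex.I))
          + ((ρ - (1 + δ) : ℝ) : ℂ) * Complex.exp ((θ : ℂ) * Complex.I) := by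
      rw [pjl, hrl, ← hθdef]
      push_cast
      ring
    rw [hsplit]
    have h1 : ‖(ρ : ℂ) * (Complex.exp ((φ : ℂ) * Complex.I)
          - Complex.exp ((θ : ℂ) * Complex.I))‖ ≤ ρ * (π / N) := by
      rw [norm_mul, Complex.norm_real, Real.norm_eq_abs, abs_of_pos hρpos]
      apply mul_le_mul_of_nonneg_left _ hρpos.le
      refine le_trans (aux_dist_exp_exp φ θ) ?_
      rw [hφj] at hφ1
      rw [hφj1] at hφ2
      rw [abs_le]
      constructor <;> linarith
    have h2 : ‖((ρ - (1 + δ) : ℝ) : ℂ) * Complex.exp ((θ : ℂ) * Complex.I)‖ ≤ ε * δ / 2 := by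
      rw [norm_mul, aux_norm_exp_mul_I, mul_one, Complex.norm_real, Real.norm_eq_abs]
      rw [abs_le]
      constructor <;> linarith
    have h3 : ρ * (π / N) ≤ 25 / 48 * (ε * δ) := by
      have hρ2' : ρ ≤ 25 / 24 * (1 + δ) := by nlinarith
      have := mul_le_mul_of_nonneg_right hρ2' hπN0.le
      have h4 : π / N * (1 + δ) = (1 + δ) * (π / N) := by ring
      nlinarith
    calc ‖_ + _‖ ≤ _ + _ := norm_add_le _ _
      _ ≤ ρ * (π / N) + ε * δ / 2 := add_le_add h1 h2
      _ < 3 / 2 * ε * δ := by nlinarith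
  refine ⟨hpart_a, ?_⟩
  -- part (b)
  have hPeq : Pjl ε j l = (fun z => Complex.exp ((θ : ℂ) * Complex.I) * z) ''
      auxSector (Rl ε l) (Rprev ε l) (-(π / N)) (π / N) := by
    ext z
    constructor
    · rintro ⟨ρ, φ, hρ1, hρ2, hφ1, hφ2, rfl⟩
      refine ⟨(ρ : ℂ) * Complex.exp (((φ - θ : ℝ) : ℂ) * Complex.I),
        ⟨ρ, φ - θ, hρ1, hρ2, by rw [hφj] at hφ1; linarith, by rw [hφj1] at hφ2; linarith, rfl⟩, ?_⟩
      beta_reduce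
      rw [show Complex.exp ((θ : ℂ) * Complex.I) *
            ((ρ : ℂ) * Complex.exp (((φ - θ : ℝ) : ℂ) * Complex.I))
          = (ρ : ℂ) * Complex.exp ((θ : ℂ) * Complex.I + ((φ - θ : ℝ) : ℂ) * Complex.I) by
        rw [Complex.exp_add]; ring]
      congr 2
      push_cast
      ring
    · rintro ⟨w, ⟨ρ, ψ, hρ1, hρ2, hψ1, hψ2, rfl⟩, rfl⟩
      refine ⟨ρ, θ + ψ, hρ1, hρ2, by rw [hφj]; linarith, by rw [hφj1]; linarith, ?_⟩
      beta_reduce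
      rw [show Complex.exp ((θ : ℂ) * Complex.I) *
            ((ρ : ℂ) * Complex.exp ((ψ : ℂ) * Complex.I))
          = (ρ : ℂ) * Complex.exp ((θ : ℂ) * Complex.I + (ψ : ℂ) * Complex.I) by
        rw [Complex.exp_add]; ring]
      congr 2
      push_cast
      ring
  have hπNltπ : π / N < π := by
    rw [div_lt_iff₀ hn0]
    nlinarith [pi_pos]
  have hvolP : volume (Pjl ε j l)
      = ENNReal.ofReal (π / N - -(π / N)) *
        ENNReal.ofReal ((Rprev ε l ^ 2 - Rl ε l ^ 2) / 2) := by
    rw [hPeq, aux_rot_volume _ _ (auxSector_measurableSet _ _ _ _),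
      auxSector_volume (by linarith) hRlle (by linarith) (by linarith) hπNltπ]
  rw [hvolP, hinf, Complex.volume_ball]
  -- rewrite everything as ofReal
  have hNNpi : (NNReal.pi : ℝ≥0∞) = ENNReal.ofReal π := by
    rw [ENNReal.ofReal]
    congr 1
    ext
    rw [Real.coe_toNNReal _ pi_pos.le]
    rfl
  have hrad : (0 : ℝ) ≤ 3 / 2 * ε * δ := by nlinarith
  have hLHS : ENNReal.ofReal (4 / (27 * π)) *
      (ENNReal.ofReal (3 / 2 * ε * δ) ^ 2 * (NNReal.pi : ℝ≥0∞))
      = ENNReal.ofReal (4 / (27 * π) * ((3 / 2 * ε * δ) ^ 2 * π)) := by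
    rw [hNNpi, ← ENNReal.ofReal_pow hrad,
      ← ENNReal.ofReal_mul (pow_nonneg hrad 2),
      ← ENNReal.ofReal_mul (by positivity : (0:ℝ) ≤ 4 / (27 * π))]
  rw [hLHS, ← ENNReal.ofReal_mul (by linarith [hπN0] : (0:ℝ) ≤ π / N - -(π / N))]
  apply ENNReal.ofReal_le_ofReal
  -- now a real inequality
  have hNεδ : N * (ε * δ) ≤ 152 / 75 * (π * (1 + δ)) := by
    have h1 := mul_le_mul_of_nonneg_right hnub hεδ0.le
    have h2 : 76 / 75 * A * (ε * δ) = 76 / 75 * (A * (ε * δ)) := by ring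
    rw [h2, hAεδ] at h1
    linarith
  have hgoal : 152 / 225 * (ε * δ) * (1 + δ) ≤ Rprev ε l ^ 2 - Rl ε l ^ 2 := by
    rw [hRp, hRlv]
    nlinarith [mul_le_mul_of_nonneg_left hq1 (show (0:ℝ) ≤ 2 * (1 + δ) by linarith),
      hq0, hq2, hεδ0, hδ0,
      mul_nonneg (sub_nonneg.2 hq2)
        (by positivity : (0:ℝ) ≤ ε * δ / 2 + ε * δ / (2 * (1 + ε)))]
  have hL : 4 / (27 * π) * ((3 / 2 * ε * δ) ^ 2 * π) = 1 / 3 * (ε * δ) ^ 2 := by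
    field_simp
    ring
  rw [hL]
  have hR : π / N - -(π / N) = 2 * (π / N) := by ring
  rw [hR]
  rw [show 2 * (π / N) * ((Rprev ε l ^ 2 - Rl ε l ^ 2) / 2)
      = π * (Rprev ε l ^ 2 - Rl ε l ^ 2) / N by field_simp]
  rw [le_div_iff₀ hn0]
  calc 1 / 3 * (ε * δ) ^ 2 * N = 1 / 3 * (ε * δ) * (N * (ε * δ)) := by ring
    _ ≤ 1 / 3 * (ε * δ) * (152 / 75 * (π * (1 + δ))) := by
        apply mul_le_mul_of_nonneg_left hNεδ (by nlinarith)
    _ = π * (152 / 225 * (ε * δ) * (1 + δ)) := by ring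
    _ ≤ π * (Rprev ε l ^ 2 - Rl ε l ^ 2) := by
        apply mul_le_mul_of_nonneg_left hgoal pi_pos.le

end
end
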